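/- arXiv:2108.00767 — 5 statements merged into one kernel-verified Lean document; each statement's English description precedes it below -/
import Mathlib

section
/- Let g : ℝ^d → ℝ be a nonnegative integrable function with finite second moment and with g^(1+2/d) integrable. Then (∫ g dx)^(2+2/d) ≤ c_d · (∫ g(x)|x|² dx) · (∫ g(x)^(1+2/d) dx) for a constant c_d depending only on d. -/
open MeasureTheory

/-- For nonnegative integrable `g` on `ℝ^d` with finite second moment and with
`g^(1+2/d)` integrable, `(∫ g)^(2+2/d) ≤ c_d (∫ g |x|²)(∫ g^(1+2/d))`. -/
theorem uncertainty_one_point (d : ℕ) (hd : 1 ≤ d) :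
    ∃ C : ℝ, 0 < C ∧ ∀ g : EuclideanSpace ℝ (Fin d) → ℝ,
      (∀ x, 0 ≤ g x) → Integrable g →
      Integrable (fun x => g x * ‖x‖ ^ 2) →
      Integrable (fun x => g x ^ ((1 : ℝ) + 2 / d)) →
      (∫ x, g x) ^ ((2 : ℝ) + 2 / d) ≤
        C * (∫ x, g x * ‖x‖ ^ 2) * ∫ x, g x ^ ((1 : ℝ) + 2 / d) := by
  have hd0 : (0:ℝ) < d := by exact_mod_cast hd
  have hdne : (d:ℝ) ≠ 0 := hd0.ne'
  haveI : Nonempty (Fin d) := ⟨⟨0, hd⟩⟩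
  haveI : Nontrivial (EuclideanSpace ℝ (Fin d)) := inferInstance
  set ω := (volume (Metric.ball (0:EuclideanSpace ℝ (Fin d)) 1)).toReal with hωdef
  have hω : 0 < ω :=
    ENNReal.toReal_pos (Metric.measure_ball_pos volume 0 one_pos).ne' measure_ball_lt_top.ne
  refine ⟨(2 * 4 ^ d * ω) ^ ((2:ℝ)/d), Real.rpow_pos_of_pos (by positivity) _, ?_⟩
  intro g hg hInt hIA hIB
  set A := ∫ x, g x * ‖x‖^2 with hAdef
  set B := ∫ x, g x ^ ((1:ℝ) + 2/(d:ℝ)) with hBdef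
  set I := ∫ x, g x with hIdef
  have hA0 : 0 ≤ A := integral_nonneg fun x => mul_nonneg (hg x) (by positivity)
  have hB0 : 0 ≤ B := integral_nonneg fun x => Real.rpow_nonneg (hg x) _
  have hI0 : 0 ≤ I := integral_nonneg hg
  have hexp : (0:ℝ) < 2 + 2/(d:ℝ) := by
    have : (0:ℝ) ≤ 2/(d:ℝ) := by positivity
    linarith
  rcases hI0.eq_or_lt with hI | hI
  · rw [← hI, Real.zero_rpow hexp.ne']
    exact mul_nonneg (mul_nonneg (Real.rpow_pos_of_pos (by positivity) _).le hA0) hB0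
  -- positivity of A and B
  have hApos : 0 < A := by
    rcases hA0.eq_or_lt with h | h
    · exfalso
      have hz : (fun x => g x * ‖x‖^2) =ᵐ[volume] 0 :=
        (integral_eq_zero_iff_of_nonneg
          (fun x => mul_nonneg (hg x) (by positivity)) hIA).1 h.symm
      have hne : ∀ᵐ x : EuclideanSpace ℝ (Fin d), x ≠ 0 := by
        rw [ae_iff]
        simp only [not_not, Set.setOf_eq_eq_singleton]
        exact measure_singleton 0
      have hg0 : g =ᵐ[volume] 0 := by
        filter_upwards [hz, hne] with x h1 h2
        have hx : (0:ℝ) < ‖x‖ := norm_pos_iff.2 h2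
        simp only [Pi.zero_apply] at h1 ⊢
        exact (mul_eq_zero.1 h1).resolve_right (by positivity : (0:ℝ) < ‖x‖^2).ne'
      exact hI.ne' (integral_eq_zero_of_ae hg0)
    · exact h
  have hBpos : 0 < B := by
    rcases hB0.eq_or_lt with h | h
    · exfalso
      have hz : (fun x => g x ^ ((1:ℝ) + 2/(d:ℝ))) =ᵐ[volume] 0 :=
        (integral_eq_zero_iff_of_nonneg (fun x => Real.rpow_nonneg (hg x) _) hIB).1 h.symm
      have hg0 : g =ᵐ[volume] 0 := by
        filter_upwards [hz] with x h1
        simp only [Pi.zero_apply] at h1 ⊢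
        have hpne : ((1:ℝ) + 2/(d:ℝ)) ≠ 0 := by
          have : (0:ℝ) ≤ 2/(d:ℝ) := by positivity
          intro hc; linarith
        exact (Real.rpow_eq_zero (hg x) hpne).1 h1
      exact hI.ne' (integral_eq_zero_of_ae hg0)
    · exact h
  -- key splitting inequality
  have key : ∀ R lam : ℝ, 0 < R → 0 < lam →
      I ≤ A / R^2 + lam ^ (-(2/(d:ℝ))) * B + lam * (R^d * ω) := by
    intro R lam hR hlam
    set f1 : EuclideanSpace ℝ (Fin d) → ℝ := fun x => g x * ‖x‖^2 / R^2 with hf1def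
    set f2 : EuclideanSpace ℝ (Fin d) → ℝ :=
      fun x => lam ^ (-(2/(d:ℝ))) * g x ^ ((1:ℝ) + 2/(d:ℝ)) with hf2def
    set f3 : EuclideanSpace ℝ (Fin d) → ℝ :=
      (Metric.ball (0:EuclideanSpace ℝ (Fin d)) R).indicator (fun _ => lam) with hf3def
    have hf1 : Integrable f1 := hIA.div_const _
    have hf2 : Integrable f2 := hIB.const_mul _
    have hf3 : Integrable f3 := by
      rw [hf3def, integrable_indicator_iff measurableSet_ball]
      exact integrableOn_const measure_ball_lt_top.ne
    have hpt : ∀ x, g x ≤ f1 x + f2 x + f3 x := by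
      intro x
      have hgx := hg x
      have h2nn : 0 ≤ f2 x :=
        mul_nonneg (Real.rpow_nonneg hlam.le _) (Real.rpow_nonneg hgx _)
      have h3nn : 0 ≤ f3 x := Set.indicator_nonneg (fun _ _ => hlam.le) x
      have h1nn : 0 ≤ f1 x := by
        have : (0:ℝ) ≤ ‖x‖^2 / R^2 := by positivity
        exact mul_nonneg hgx this |>.trans_eq (by rw [hf1def]; ring)
      by_cases hx : ‖x‖ < R
      · have h3 : f3 x = lam :=
          Set.indicator_of_mem (by simpa [Metric.mem_ball, dist_zero_right] using hx) _
        by_cases hgl : g x ≤ lam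
        · rw [h3]; linarith
        · push_neg at hgl
          have hgx0 : 0 < g x := hlam.trans hgl
          have e2 : lam ^ ((2:ℝ)/(d:ℝ)) ≤ g x ^ ((2:ℝ)/(d:ℝ)) :=
            Real.rpow_le_rpow hlam.le hgl.le (by positivity)
          have e3 : lam ^ (-(2/(d:ℝ))) * lam ^ ((2:ℝ)/(d:ℝ)) = 1 := by
            rw [← Real.rpow_add hlam]; norm_num
          have h4 : (1:ℝ) ≤ lam ^ (-(2/(d:ℝ))) * g x ^ ((2:ℝ)/(d:ℝ)) := by
            calc (1:ℝ) = lam ^ (-(2/(d:ℝ))) * lam ^ ((2:ℝ)/(d:ℝ)) := e3.symm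
            _ ≤ lam ^ (-(2/(d:ℝ))) * g x ^ ((2:ℝ)/(d:ℝ)) :=
              mul_le_mul_of_nonneg_left e2 (Real.rpow_pos_of_pos hlam _).le
          have hcal : g x ≤ f2 x := by
            have e1 : g x ^ ((1:ℝ) + 2/(d:ℝ)) = g x * g x ^ ((2:ℝ)/(d:ℝ)) := by
              rw [Real.rpow_add hgx0, Real.rpow_one]
            calc g x = 1 * g x := (one_mul _).symm
            _ ≤ (lam ^ (-(2/(d:ℝ))) * g x ^ ((2:ℝ)/(d:ℝ))) * g x :=
              mul_le_mul_of_nonneg_right h4 hgx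
            _ = f2 x := by show _ = lam ^ (-(2/(d:ℝ))) * g x ^ ((1:ℝ) + 2/(d:ℝ)); rw [e1]; ring
          linarith
      · push_neg at hx
        have h1 : g x ≤ f1 x := by
          have hfrac : (1:ℝ) ≤ ‖x‖^2 / R^2 := by
            rw [le_div_iff₀ (by positivity)]
            nlinarith
          calc g x = g x * 1 := (mul_one _).symm
          _ ≤ g x * (‖x‖^2 / R^2) := mul_le_mul_of_nonneg_left hfrac hgx
          _ = f1 x := by show _ = g x * ‖x‖^2 / R^2; ring
        linarith
    have hint : I ≤ ∫ x, (f1 x + f2 x + f3 x) :=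
      integral_mono hInt ((hf1.add hf2).add hf3) hpt
    have eadd : (∫ x, (f1 x + f2 x + f3 x))
        = (∫ x, (f1 x + f2 x)) + ∫ x, f3 x :=
      integral_add (hf1.add hf2) hf3
    have eadd2 : (∫ x, (f1 x + f2 x)) = (∫ x, f1 x) + ∫ x, f2 x :=
      integral_add hf1 hf2
    rw [eadd, eadd2] at hint
    have i1 : ∫ x, f1 x = A / R^2 := by
      rw [hf1def]; exact integral_div _ _
    have i2 : ∫ x, f2 x = lam ^ (-(2/(d:ℝ))) * B := by
      rw [hf2def]; exact integral_const_mul _ _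
    have i3 : ∫ x, f3 x = lam * (R^d * ω) := by
      rw [hf3def, integral_indicator_const _ measurableSet_ball, Measure.real,
        Measure.addHaar_ball _ _ hR.le, finrank_euclideanSpace_fin,
        ENNReal.toReal_mul, ENNReal.toReal_ofReal (by positivity)]
      rw [smul_eq_mul, ← hωdef]; ring
    rw [i1, i2, i3] at hint
    exact hint
  -- choose optimal R, lam
  have hRpos : 0 < Real.sqrt (4*A/I) := Real.sqrt_pos.2 (by positivity)
  have hlampos : (0:ℝ) < (4*B/I) ^ ((d:ℝ)/2) := Real.rpow_pos_of_pos (by positivity) _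
  have hkey := key _ _ hRpos hlampos
  have h1 : A / (Real.sqrt (4*A/I))^2 = I/4 := by
    rw [Real.sq_sqrt (by positivity)]
    field_simp
  have h2 : ((4*B/I) ^ ((d:ℝ)/2)) ^ (-(2/(d:ℝ))) * B = I/4 := by
    rw [← Real.rpow_mul (by positivity : (0:ℝ) ≤ 4*B/I),
      show (d:ℝ)/2 * (-(2/(d:ℝ))) = -1 by field_simp <;> ring, Real.rpow_neg_one]
    field_simp
  have h3 : (Real.sqrt (4*A/I))^d = (4*A/I) ^ ((d:ℝ)/2) := by
    rw [← Real.rpow_natCast (Real.sqrt (4*A/I)) d, Real.sqrt_eq_rpow,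
      ← Real.rpow_mul (by positivity : (0:ℝ) ≤ 4*A/I),
      show (1:ℝ)/2 * (d:ℕ) = (d:ℝ)/2 by push_cast; ring]
  rw [h1, h2, h3] at hkey
  have h5 : I/2 ≤ (16*A*B/I^2) ^ ((d:ℝ)/2) * ω := by
    have h6 : (4*B/I) ^ ((d:ℝ)/2) * (4*A/I) ^ ((d:ℝ)/2) = (16*A*B/I^2) ^ ((d:ℝ)/2) := by
      rw [← Real.mul_rpow (by positivity) (by positivity)]
      congr 1
      field_simp
      ring
    have := hkey
    nlinarith [h6]
  have hId : (0:ℝ) < I ^ d := pow_pos hI d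
  have hsq : ((I:ℝ)^2) ^ ((d:ℝ)/2) = I ^ d := by
    rw [← Real.rpow_natCast I 2, ← Real.rpow_natCast I d,
      ← Real.rpow_mul hI0, show ((2:ℕ):ℝ) * ((d:ℝ)/2) = ((d:ℕ):ℝ) by push_cast; ring]
  have h8 : (16*A*B/I^2) ^ ((d:ℝ)/2) * I^d = (16*A*B) ^ ((d:ℝ)/2) := by
    rw [Real.div_rpow (by positivity) (by positivity), hsq]
    exact div_mul_cancel₀ _ hId.ne'
  have h10 : I ^ (d+1) ≤ 2 * ((16*A*B) ^ ((d:ℝ)/2) * ω) := by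
    have h11 := mul_le_mul_of_nonneg_right h5 hId.le
    have e : ((16*A*B/I^2) ^ ((d:ℝ)/2) * ω) * I^d = (16*A*B) ^ ((d:ℝ)/2) * ω := by
      rw [← h8]; ring
    rw [e] at h11
    have : I ^ (d+1) = 2 * (I/2 * I^d) := by ring
    rw [this]
    linarith
  -- raise to the power 2/d
  have h12 : (I ^ (d+1)) ^ ((2:ℝ)/(d:ℝ)) ≤ (2 * ((16*A*B) ^ ((d:ℝ)/2) * ω)) ^ ((2:ℝ)/(d:ℝ)) :=
    Real.rpow_le_rpow (pow_nonneg hI0 _) h10 (by positivity)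
  have hL : (I ^ (d+1)) ^ ((2:ℝ)/(d:ℝ)) = I ^ ((2:ℝ) + 2/(d:ℝ)) := by
    rw [← Real.rpow_natCast I (d+1), ← Real.rpow_mul hI0]
    congr 1
    push_cast
    field_simp
  have hR : (2 * ((16*A*B) ^ ((d:ℝ)/2) * ω)) ^ ((2:ℝ)/(d:ℝ))
      = (2 * 4 ^ d * ω) ^ ((2:ℝ)/(d:ℝ)) * A * B := by
    have h16 : ((16:ℝ)*A*B) ^ ((d:ℝ)/2) = 4^d * (A*B) ^ ((d:ℝ)/2) := by
      rw [show (16:ℝ)*A*B = 16*(A*B) by ring,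
        Real.mul_rpow (by norm_num) (mul_nonneg hA0 hB0),
        show (16:ℝ) = 4^(2:ℕ) by norm_num,
        ← Real.rpow_natCast (4:ℝ) 2, ← Real.rpow_mul (by norm_num : (0:ℝ) ≤ 4),
        show ((2:ℕ):ℝ) * ((d:ℝ)/2) = ((d:ℕ):ℝ) by push_cast; ring,
        Real.rpow_natCast]
    rw [h16, show (2:ℝ) * (4^d * (A*B) ^ ((d:ℝ)/2) * ω) = (2*4^d*ω) * (A*B) ^ ((d:ℝ)/2) by ring,
      Real.mul_rpow (by positivity) (Real.rpow_nonneg (mul_nonneg hA0 hB0) _),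
      ← Real.rpow_mul (mul_nonneg hA0 hB0),
      show (d:ℝ)/2 * ((2:ℝ)/(d:ℝ)) = 1 by field_simp <;> ring, Real.rpow_one]
    ring
  rw [hL, hR] at h12
  exact h12
end

section
/- Let g : ℝ^d → ℝ be nonnegative and integrable with finite second moment, with g^(1+2/d) also integrable. Then (∫ g dx)^(3+2/d) ≤ c_d · (∫∫ g(x)g(x')|x'−x|² dx dx') · (∫ g^(1+2/d) dx) for a constant c_d depending only on d. -/
set_option maxHeartbeats 1000000


open MeasureTheory Metric

private lemma aux_K (a b m : ℝ) (ha : a ≠ 0) (hb : b ≠ 0) :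
    a * (m / (2*(a*b)) * b) = m / 2 := by
  field_simp

private lemma aux_alg (a m t w e : ℝ) (ht : t ≠ 0) (hw : w ≠ 0) (he : e ≠ 0) :
    a * m ^ 2 = t * 2 * w * (a / (t * (e * w)) * (m * m / 2)) * e := by
  field_simp

/-- Uncertainty principle: `(∫ g)^(3+2/d) ≤ c_d (∫∫ g(x)g(x')|x'-x|²)(∫ g^(1+2/d))`. -/
theorem uncertainty_principle (d : ℕ) (hd : 1 ≤ d) :
    ∃ C : ℝ, 0 < C ∧ ∀ g : EuclideanSpace ℝ (Fin d) → ℝ,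
      (∀ x, 0 ≤ g x) → Integrable g →
      Integrable (fun x => g x * ‖x‖ ^ 2) →
      Integrable (fun x => g x ^ ((1 : ℝ) + 2 / d)) →
      (∫ x, g x) ^ ((3 : ℝ) + 2 / d) ≤
        C * (∫ x, ∫ x', g x * g x' * ‖x' - x‖ ^ 2) *
          ∫ x, g x ^ ((1 : ℝ) + 2 / d) := by
  classical
  have hd0 : (0:ℝ) < d := by exact_mod_cast hd
  have hdne : (d:ℝ) ≠ 0 := hd0.ne'
  haveI : Nonempty (Fin d) := ⟨⟨0, hd⟩⟩
  haveI : Nontrivial (EuclideanSpace ℝ (Fin d)) := by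
    refine ⟨0, EuclideanSpace.single ⟨0, hd⟩ 1, fun h => ?_⟩
    have := congrArg (fun v => v ⟨0, hd⟩) h.symm
    simp [EuclideanSpace.single_apply] at this
  set p : ℝ := 1 + 2 / d with hp
  set q : ℝ := 1 + (d:ℝ) / 2 with hq
  have hp1 : 1 < p := by
    have : (0:ℝ) < 2 / d := by positivity
    simp only [hp]; linarith
  have hp0 : (0:ℝ) < p := lt_trans one_pos hp1
  have hq0 : (0:ℝ) < q := by rw [hq]; positivity
  have hpq : p.HolderConjugate q := by
    refine Real.holderConjugate_iff.mpr ⟨hp1, ?_⟩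
    rw [hp, hq]
    field_simp
    ring
  set ω : ℝ := (volume (ball (0 : EuclideanSpace ℝ (Fin d)) 1)).toReal with hω
  have hω0 : (0:ℝ) < ω :=
    ENNReal.toReal_pos (measure_ball_pos _ _ one_pos).ne' measure_ball_lt_top.ne
  refine ⟨2 ^ ((2:ℝ) + 2/d) * ω ^ ((2:ℝ)/d), by positivity, ?_⟩
  intro g hg0 hg hg2 hgp
  set M := ∫ x, g x with hM
  set S := ∫ x, g x * ‖x‖^2 with hS
  set Eng := ∫ x, g x ^ p with hEng
  have hM0 : 0 ≤ M := integral_nonneg hg0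
  have hS0 : 0 ≤ S := integral_nonneg (fun x => by have := hg0 x; positivity)
  have hEng0 : 0 ≤ Eng := integral_nonneg fun x => Real.rpow_nonneg (hg0 x) _
  have hpt : ∀ x x' : EuclideanSpace ℝ (Fin d),
      g x' * ‖x' - x‖^2 ≤ 2 * (g x' * ‖x'‖^2) + 2*‖x‖^2 * g x' := by
    intro x x'
    have h1 : ‖x' - x‖ ≤ ‖x'‖ + ‖x‖ := norm_sub_le _ _
    have hsq : ‖x' - x‖^2 ≤ 2*‖x'‖^2 + 2*‖x‖^2 := by
      nlinarith [mul_le_mul h1 h1 (norm_nonneg (x' - x)) (by positivity : (0:ℝ) ≤ ‖x'‖ + ‖x‖),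
        sq_nonneg (‖x'‖ - ‖x‖)]
    nlinarith [mul_le_mul_of_nonneg_left hsq (hg0 x')]
  -- integrability of the inner integrand
  have hJint : ∀ x : EuclideanSpace ℝ (Fin d),
      Integrable (fun x' => g x' * ‖x' - x‖^2) := by
    intro x
    refine Integrable.mono' ((hg2.const_mul 2).add (hg.const_mul (2*‖x‖^2))) ?_ ?_
    · exact hg.1.mul
        (((continuous_id.sub continuous_const).norm.pow 2).aestronglyMeasurable)
    · refine Filter.Eventually.of_forall fun x' => ?_
      have h3 : (0:ℝ) ≤ g x' := hg0 x'
      rw [Real.norm_eq_abs, abs_of_nonneg (by positivity)]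
      simpa [Pi.add_apply] using hpt x x'
  set J : EuclideanSpace ℝ (Fin d) → ℝ := fun x => ∫ x', g x' * ‖x' - x‖^2 with hJdef
  have hJ0 : ∀ x, 0 ≤ J x :=
    fun x => integral_nonneg fun x' => by have := hg0 x'; positivity
  have hJle : ∀ x, J x ≤ 2*S + (2*‖x‖^2) * M := by
    intro x
    have h := integral_mono (hJint x) ((hg2.const_mul 2).add (hg.const_mul (2*‖x‖^2)))
      (fun x' => by simp only [Pi.add_apply]; exact hpt x x')
    simp only [Pi.add_apply] at h
    rw [integral_add (hg2.const_mul 2) (hg.const_mul (2*‖x‖^2)),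
      integral_const_mul, integral_const_mul] at h
    exact h
  -- J is strongly measurable
  have hJsm : StronglyMeasurable J := by
    have hgg₀ := hg.1.ae_eq_mk
    have hJeq : J = fun x => ∫ x', hg.1.mk g x' * ‖x' - x‖^2 := by
      funext x
      refine integral_congr_ae (hgg₀.mono fun x' h => ?_)
      dsimp only
      rw [h]
    rw [hJeq]
    have hF : StronglyMeasurable
        (fun z : EuclideanSpace ℝ (Fin d) × EuclideanSpace ℝ (Fin d) =>
          hg.1.mk g z.2 * ‖z.2 - z.1‖^2) :=
      (hg.1.stronglyMeasurable_mk.comp_measurable measurable_snd).mul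
        (((continuous_snd.sub continuous_fst).norm.pow 2).stronglyMeasurable)
    exact hF.integral_prod_right'
  have hgJint : Integrable (fun x => g x * J x) := by
    refine Integrable.mono' ((hg.const_mul (2*S)).add (hg2.const_mul (2*M))) ?_ ?_
    · exact hg.1.mul hJsm.aestronglyMeasurable
    · refine Filter.Eventually.of_forall fun x => ?_
      have h1 := hJle x
      have h2 := hg0 x
      have h3 := hJ0 x
      rw [Real.norm_eq_abs, abs_of_nonneg (mul_nonneg h2 h3)]
      simp only [Pi.add_apply]
      nlinarith [mul_le_mul_of_nonneg_left h1 h2]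
  have hI : (∫ x, ∫ x', g x * g x' * ‖x' - x‖^2) = ∫ x, g x * J x := by
    congr 1
    funext x
    simp_rw [mul_assoc]
    exact integral_const_mul _ _
  set I := ∫ x, g x * J x with hIdef
  have hI0 : 0 ≤ I := integral_nonneg fun x => mul_nonneg (hg0 x) (hJ0 x)
  -- Memℒp of g at exponent p
  have hmem : MemLp g (ENNReal.ofReal p) volume := by
    rw [← memLp_norm_rpow_iff hg.1 (ENNReal.ofReal_pos.mpr hp0).ne' ENNReal.ofReal_ne_top,
      ENNReal.div_self (ENNReal.ofReal_pos.mpr hp0).ne' ENNReal.ofReal_ne_top,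
      ENNReal.toReal_ofReal hp0.le, memLp_one_iff_integrable]
    exact hgp.congr (Filter.Eventually.of_forall fun x => by
      simp [Real.norm_of_nonneg (hg0 x)])
  -- key pointwise bound
  have key : ∀ r : ℝ, 0 < r → ∀ x : EuclideanSpace ℝ (Fin d),
      M ≤ Eng ^ (1/p) * (r^d * ω) ^ (1/q) + (r^2)⁻¹ * J x := by
    intro r hr x
    set B := ball x r with hB
    have hBm : MeasurableSet B := measurableSet_ball
    -- Hölder on the ball
    have hind : MemLp (B.indicator fun _ => (1:ℝ)) (ENNReal.ofReal q) volume :=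
      memLp_indicator_const _ hBm 1 (Or.inr measure_ball_lt_top.ne)
    have hold := integral_mul_le_Lp_mul_Lq_of_nonneg hpq
      (Filter.Eventually.of_forall hg0)
      (Filter.Eventually.of_forall fun a => Set.indicator_nonneg (fun _ _ => zero_le_one) a)
      hmem hind
    have e1 : ∀ a, g a * (B.indicator (fun _ => (1:ℝ)) a) = B.indicator g a := by
      intro a
      by_cases h : a ∈ B <;> simp [Set.indicator_of_mem, Set.indicator_of_notMem, h]
    have e2 : ∀ a, (B.indicator (fun _ => (1:ℝ)) a) ^ q = B.indicator (fun _ => (1:ℝ)) a := by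
      intro a
      by_cases h : a ∈ B <;>
        simp [Set.indicator_of_mem, Set.indicator_of_notMem, h,
          Real.one_rpow, Real.zero_rpow hq0.ne']
    simp_rw [e1, e2] at hold
    rw [integral_indicator hBm, integral_indicator_const (1:ℝ) hBm, smul_eq_mul,
      mul_one] at hold
    have hvol : (volume B).toReal = r^d * ω := by
      rw [hB, Measure.addHaar_ball volume x hr.le, finrank_euclideanSpace_fin,
        ENNReal.toReal_mul, ENNReal.toReal_ofReal (by positivity)]
    rw [measureReal_def, hvol] at hold
    -- tail bound
    have tail : (∫ a in Bᶜ, g a) ≤ (r^2)⁻¹ * J x := by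
      have step1 : (∫ a in Bᶜ, g a) ≤ ∫ a in Bᶜ, (r^2)⁻¹ * (g a * ‖a - x‖^2) := by
        refine setIntegral_mono_on hg.integrableOn
          (((hJint x).const_mul _).integrableOn) hBm.compl fun a ha => ?_
        have hdist : r ≤ ‖a - x‖ := by
          have := ha
          rw [hB, Set.mem_compl_iff, mem_ball, not_lt, dist_eq_norm] at this
          exact this
        have h1 : r^2 ≤ ‖a - x‖^2 := by nlinarith [norm_nonneg (a - x)]
        have h2 := hg0 a
        rw [inv_mul_eq_div, le_div_iff₀ (by positivity)]
        nlinarith [mul_le_mul_of_nonneg_left h1 h2]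
      have step2 : (∫ a in Bᶜ, (r^2)⁻¹ * (g a * ‖a - x‖^2))
          = (r^2)⁻¹ * ∫ a in Bᶜ, g a * ‖a - x‖^2 := integral_const_mul _ _
      have step3 : (∫ a in Bᶜ, g a * ‖a - x‖^2) ≤ J x :=
        setIntegral_le_integral (hJint x)
          (Filter.Eventually.of_forall fun a => by have := hg0 a; positivity)
      calc (∫ a in Bᶜ, g a) ≤ ∫ a in Bᶜ, (r^2)⁻¹ * (g a * ‖a - x‖^2) := step1
        _ = (r^2)⁻¹ * ∫ a in Bᶜ, g a * ‖a - x‖^2 := step2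
        _ ≤ (r^2)⁻¹ * J x := by
            exact mul_le_mul_of_nonneg_left step3 (by positivity)
    calc M = (∫ a in B, g a) + ∫ a in Bᶜ, g a := (integral_add_compl hBm hg).symm
      _ ≤ Eng ^ (1/p) * (r^d * ω) ^ (1/q) + (r^2)⁻¹ * J x := add_le_add hold tail
  -- integrated bound
  have main : ∀ r : ℝ, 0 < r →
      M * M ≤ (Eng ^ (1/p) * (r^d * ω) ^ (1/q)) * M + (r^2)⁻¹ * I := by
    intro r hr
    set K := Eng ^ (1/p) * (r^d * ω) ^ (1/q) with hK
    have hK0 : 0 ≤ K := by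
      have : (0:ℝ) ≤ r^d * ω := by positivity
      exact mul_nonneg (Real.rpow_nonneg hEng0 _) (Real.rpow_nonneg this _)
    have hmono := integral_mono (hg.mul_const M)
      ((hg.mul_const K).add (hgJint.const_mul ((r^2)⁻¹)))
      (fun x => by
        have h1 := key r hr x
        have h2 := hg0 x
        simp only
        simp only [Pi.add_apply]
        nlinarith [mul_le_mul_of_nonneg_left h1 h2])
    simp only [Pi.add_apply] at hmono
    rw [integral_mul_const, integral_add (hg.mul_const K) (hgJint.const_mul _),
      integral_mul_const, integral_const_mul] at hmono
    rw [← hM, ← hIdef] at hmono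
    linarith
  -- case M = 0
  rcases eq_or_lt_of_le hM0 with hM0' | hMpos
  · rw [← hM0', Real.zero_rpow (by positivity), hI]
    have : (0:ℝ) ≤ 2 ^ ((2:ℝ) + 2/d) * ω ^ ((2:ℝ)/d) := by positivity
    exact mul_nonneg (mul_nonneg this hI0) hEng0
  -- case M > 0
  have hEngpos : 0 < Eng := by
    rcases eq_or_lt_of_le hEng0 with h0 | h
    · exfalso
      have hz : (fun x => g x ^ p) =ᵐ[volume] 0 :=
        (integral_eq_zero_iff_of_nonneg (fun x => Real.rpow_nonneg (hg0 x) p) hgp).mp h0.symm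
      have hgz : g =ᵐ[volume] 0 := hz.mono fun x hx => by
        have hx' : g x ^ p = 0 := hx
        have := (Real.rpow_eq_zero_iff_of_nonneg (hg0 x)).mp hx'
        simpa using this.1
      have : M = 0 := by rw [hM, integral_congr_ae hgz]; simp
      linarith
    · exact h
  set A := Eng ^ (1/p) * ω ^ (1/q) with hA
  have hEngp : (0:ℝ) < Eng ^ (1/p) := Real.rpow_pos_of_pos hEngpos _
  have hωq : (0:ℝ) < ω ^ (1/q) := Real.rpow_pos_of_pos hω0 _
  have hA0 : 0 < A := mul_pos hEngp hωq
  set r := (M / (2*A)) ^ (q / (d:ℝ)) with hr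
  have hbase : (0:ℝ) < M / (2*A) := by positivity
  have hr0 : 0 < r := Real.rpow_pos_of_pos hbase _
  have hrd : r ^ d = (M/(2*A)) ^ q := by
    rw [hr, ← Real.rpow_natCast ((M/(2*A)) ^ (q/(d:ℝ))) d, ← Real.rpow_mul hbase.le]
    congr 1
    field_simp
  have hK : Eng ^ (1/p) * (r^d * ω) ^ (1/q) = M / 2 := by
    rw [hrd, Real.mul_rpow (Real.rpow_nonneg hbase.le _) hω0.le,
      ← Real.rpow_mul hbase.le, mul_one_div, div_self hq0.ne', Real.rpow_one]
    rw [hA]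
    exact aux_K _ _ M hEngp.ne' hωq.ne'
  have hmain := main r hr0
  rw [hK] at hmain
  have h2 : r^2 * (M * M / 2) ≤ I := by
    have h1 : M * M / 2 ≤ (r^2)⁻¹ * I := by linarith
    have := mul_le_mul_of_nonneg_left h1 (le_of_lt (by positivity : (0:ℝ) < r^2))
    rwa [← mul_assoc, mul_inv_cancel₀ (by positivity : (r:ℝ)^2 ≠ 0), one_mul] at this
  have hr2 : r^2 = (M/(2*A)) ^ p := by
    rw [hr, ← Real.rpow_natCast ((M/(2*A)) ^ (q/(d:ℝ))) 2, ← Real.rpow_mul hbase.le]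
    congr 1
    rw [hp, hq]
    field_simp [hdne]
    ring
  have hAp : A ^ p = Eng * ω ^ ((2:ℝ)/d) := by
    have hqp : 1/q * p = 2/(d:ℝ) := by
      rw [hp, hq]
      rw [div_mul_eq_mul_div, div_eq_div_iff (by positivity) hdne]
      field_simp [hdne]
      ring
    rw [hA, Real.mul_rpow hEngp.le hωq.le, ← Real.rpow_mul hEng0, ← Real.rpow_mul hω0.le,
      one_div_mul_cancel hp0.ne', Real.rpow_one, hqp]
  have hdivp : (M/(2*A))^p = M^p / (2^p * A^p) := by
    rw [Real.div_rpow hM0 (by positivity), Real.mul_rpow (by norm_num) hA0.le]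
  have hMp : M ^ ((3:ℝ)+2/d) = M ^ p * M^2 := by
    rw [← Real.rpow_natCast M 2, ← Real.rpow_add hMpos]
    congr 1
    rw [hp]
    push_cast
    ring
  have h2p : (2:ℝ) ^ ((2:ℝ) + 2/d) = 2^p * 2 := by
    rw [show ((2:ℝ) + 2/(d:ℝ)) = p + 1 by rw [hp]; ring, Real.rpow_add two_pos,
      Real.rpow_one]
  -- final computation
  rw [hI]
  have heq : M ^ ((3:ℝ)+2/d)
      = 2 ^ ((2:ℝ) + 2/d) * ω ^ ((2:ℝ)/d) * (r^2 * (M * M / 2)) * Eng := by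
    rw [hMp, h2p, hr2, hdivp, hAp]
    exact aux_alg (M^p) M (2^p) (ω ^ ((2:ℝ)/d)) Eng
      (Real.rpow_pos_of_pos two_pos p).ne' (Real.rpow_pos_of_pos hω0 _).ne' hEngpos.ne'
  rw [heq]
  have hC0 : (0:ℝ) ≤ 2 ^ ((2:ℝ) + 2/d) * ω ^ ((2:ℝ)/d) := by positivity
  calc 2 ^ ((2:ℝ) + 2/d) * ω ^ ((2:ℝ)/d) * (r^2 * (M * M / 2)) * Eng
      ≤ 2 ^ ((2:ℝ) + 2/d) * ω ^ ((2:ℝ)/d) * I * Eng := by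
        exact mul_le_mul_of_nonneg_right (mul_le_mul_of_nonneg_left h2 hC0) hEng0
    _ = 2 ^ ((2:ℝ) + 2/d) * ω ^ ((2:ℝ)/d) * I * Eng := rfl
end

section
/- Let S : ℝ^(1+d) → Sym(1+d) be a C¹ symmetric-matrix-valued function, written blockwise S = [[ρ, mᵀ],[m, T]] with ρ scalar, m : ℝ^(1+d) → ℝ^d, T symmetric d×d. Suppose Div_{t,x} S = 0 (row-wise divergence). Fix α > 0 and define on the region 1+tα > 0 the change of variables s = t/(1+tα), y = x/(1+tα), and the tensor S̄ with blocks ρ̄ = (1+tα)^d ρ, m̄ = (1+tα)^{d+1} m − α(1+tα)^d ρ x, T̄ = (1+tα)^{d+2} T − α(1+tα)^{d+1}(m⊗x + x⊗m) + α²(1+tα)^d ρ x⊗x, where the right-hand sides are evaluated at (t,x) corresponding to (s,y). Then Div_{s,y} S̄ = 0. -/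
open Matrix

/-- The projectively transformed tensor: with `a = (1 - α s)⁻¹ = 1 + t α` and
`z = a • w` the original coordinates `(t, x)`, the blocks are
`ρ̄ = a^d ρ`, `m̄ = a^(d+1) m - α a^d ρ x`,
`T̄ = a^(d+2) T - α a^(d+1) (m ⊗ x + x ⊗ m) + α² a^d ρ x ⊗ x`. -/
noncomputable def projTensor (d : ℕ) (α : ℝ)
    (S : (Fin (d + 1) → ℝ) → Matrix (Fin (d + 1)) (Fin (d + 1)) ℝ)
    (w : Fin (d + 1) → ℝ) : Matrix (Fin (d + 1)) (Fin (d + 1)) ℝ :=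
  let a : ℝ := (1 - α * w 0)⁻¹
  let z : Fin (d + 1) → ℝ := fun k => a * w k
  Matrix.of fun i j =>
    if i = 0 then
      if j = 0 then a ^ d * S z 0 0
      else a ^ (d + 1) * S z 0 j - α * a ^ d * S z 0 0 * z j
    else
      if j = 0 then a ^ (d + 1) * S z i 0 - α * a ^ d * S z 0 0 * z i
      else a ^ (d + 2) * S z i j
        - α * a ^ (d + 1) * (S z i 0 * z j + z i * S z 0 j)
        + α ^ 2 * a ^ d * S z 0 0 * z i * z j

/-- If `S` is a C¹ symmetric tensor which is Divergence-free on the region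
`1 + t α > 0`, then its projective transform `S̄` is Divergence-free in the
new variables `(s, y)` on the region `1 - α s > 0`. -/
theorem projTensor_divergenceFree (d : ℕ) (α : ℝ) (hα : 0 < α)
    (S : (Fin (d + 1) → ℝ) → Matrix (Fin (d + 1)) (Fin (d + 1)) ℝ)
    (hS1 : ∀ i j, ContDiff ℝ 1 (fun z => S z i j))
    (hsym : ∀ z, (S z).IsSymm)
    (hdiv : ∀ z : Fin (d + 1) → ℝ, 0 < 1 + α * z 0 →
      ∀ i, ∑ j, fderiv ℝ (fun w => S w i j) z (Pi.single j 1) = 0) :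
    ∀ w : Fin (d + 1) → ℝ, 0 < 1 - α * w 0 →
      ∀ i, ∑ j, fderiv ℝ (fun w' => projTensor d α S w' i j) w (Pi.single j 1) = 0 := by
  intro w hw i
  have hbne : (1 - α * w 0) ≠ 0 := ne_of_gt hw
  obtain ⟨a, ha_def⟩ : ∃ a : ℝ, a = (1 - α * w 0)⁻¹ := ⟨_, rfl⟩
  have ha1 : a * (1 - α * w 0) = 1 := by rw [ha_def]; exact inv_mul_cancel₀ hbne
  have hpow : (d : ℝ) * a ^ (d - 1) * a = (d : ℝ) * a ^ d := by
    cases d with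
    | zero => simp
    | succ n => simp only [Nat.succ_sub_one]; push_cast; ring
  obtain ⟨zfun, hzfun_def⟩ : ∃ zf : (Fin (d+1) → ℝ) → (Fin (d+1) → ℝ),
      zf = fun w' => (1 - α * w' 0)⁻¹ • w' := ⟨_, rfl⟩
  obtain ⟨z, hz_def⟩ : ∃ zz : Fin (d+1) → ℝ, zz = zfun w := ⟨_, rfl⟩
  have hzpos : 0 < 1 + α * z 0 := by
    rw [hz_def, hzfun_def]
    show 0 < 1 + α * ((1 - α * w 0)⁻¹ * w 0)
    have h2 : 1 + α * ((1 - α * w 0)⁻¹ * w 0) = (1 - α * w 0)⁻¹ := by field_simp; ring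
    rw [h2]
    exact inv_pos.mpr hw
  obtain ⟨cA, hcA_def⟩ : ∃ c : (Fin (d+1) → ℝ) →L[ℝ] ℝ,
      c = (α * a^2) • (ContinuousLinearMap.proj 0) := ⟨_, rfl⟩
  have hproj : ∀ k : Fin (d+1), HasFDerivAt (fun w' : Fin (d+1) → ℝ => w' k)
      (ContinuousLinearMap.proj (R := ℝ) (φ := fun _ : Fin (d+1) => ℝ) k) w := fun k =>
    (ContinuousLinearMap.proj (R := ℝ) (φ := fun _ : Fin (d+1) => ℝ) k).hasFDerivAt
  have h2' := ((hproj 0).const_mul α).const_sub 1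
  have hA : HasFDerivAt (fun w' : Fin (d+1) → ℝ => (1 - α * w' 0)⁻¹) cA w := by
    refine ((hasFDerivAt_inv' (𝕜 := ℝ) hbne).comp w h2').congr_fderiv ?_
    ext v
    rw [hcA_def, ha_def]
    simp [ContinuousLinearMap.mulLeftRight_apply, ← inv_pow]
    ring
  have hApow : ∀ n : ℕ, HasFDerivAt (fun w' : Fin (d+1) → ℝ => (1 - α * w' 0)⁻¹ ^ n)
      (((n:ℝ) * a^(n-1)) • cA) w := by
    intro n
    have h := (hasDerivAt_pow n ((1 - α * w 0)⁻¹)).comp_hasFDerivAt w hA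
    rw [← ha_def] at h
    exact h
  obtain ⟨cL, hcL_def⟩ : ∃ c : (Fin (d+1) → ℝ) →L[ℝ] (Fin (d+1) → ℝ),
      c = a • ContinuousLinearMap.id ℝ (Fin (d+1) → ℝ) + cA.smulRight w := ⟨_, rfl⟩
  have hZf : HasFDerivAt zfun cL w := by
    rw [hzfun_def, hcL_def, ha_def]
    exact hA.smul (hasFDerivAt_id w)
  have hDiff : ∀ (p q : Fin (d+1)) (u : Fin (d+1) → ℝ),
      HasFDerivAt (fun v => S v p q) (fderiv ℝ (fun v => S v p q) u) u := fun p q u =>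
    (((hS1 p q).differentiable one_ne_zero) u).hasFDerivAt
  have hF : ∀ p q : Fin (d+1), HasFDerivAt (fun w' => S (zfun w') p q)
      ((fderiv ℝ (fun v => S v p q) z).comp cL) w := by
    intro p q
    rw [hz_def]
    exact (hDiff p q (zfun w)).comp w hZf
  have hev : ∀ (p q : Fin (d+1)) (v : Fin (d+1) → ℝ),
      (fderiv ℝ (fun v => S v p q) z) (cL v)
        = a * (fderiv ℝ (fun v => S v p q) z v)
          + (α * a^2 * v 0) * (fderiv ℝ (fun v => S v p q) z w) := by
    intro p q v
    have hv : cL v = a • v + (α * a^2 * v 0) • w := by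
      ext k
      rw [hcL_def, hcA_def]
      simp
    rw [hv, map_add]
    simp [smul_eq_mul]
  have hcAv : ∀ (j : Fin (d+1)), cA (Pi.single j 1) = α * a^2 * ((Pi.single j 1 : Fin (d+1) → ℝ) 0) := by
    intro j
    rw [hcA_def]
    simp
  have hZ : ∀ k : Fin (d+1), HasFDerivAt (fun w' : Fin (d+1) → ℝ => (1 - α * w' 0)⁻¹ * w' k)
      ((1 - α * w 0)⁻¹ • ContinuousLinearMap.proj k + (w k) • cA) w := fun k =>
    hA.mul (hproj k)
  -- the divergence-free hypothesis at z
  have hdiv0 := hdiv z hzpos 0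
  rw [Fin.sum_univ_succ] at hdiv0
  -- expansion of derivative in direction w
  have hHsum : ∀ p q : Fin (d+1), fderiv ℝ (fun v => S v p q) z w
      = w 0 * fderiv ℝ (fun v => S v p q) z (Pi.single 0 1)
        + ∑ j : Fin d, w j.succ * fderiv ℝ (fun v => S v p q) z (Pi.single j.succ 1) := by
    intro p q
    have hw_eq : (∑ k : Fin (d+1), w k • (Pi.single k 1 : Fin (d+1) → ℝ)) = w := by
      funext k'
      simp [Pi.single_apply, Finset.sum_ite_eq]
    calc fderiv ℝ (fun v => S v p q) z w
        = fderiv ℝ (fun v => S v p q) z (∑ k : Fin (d+1), w k • (Pi.single k 1 : Fin (d+1) → ℝ)) := by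
          rw [hw_eq]
      _ = ∑ k : Fin (d+1), w k * fderiv ℝ (fun v => S v p q) z (Pi.single k 1) := by
          rw [map_sum]
          simp [smul_eq_mul]
      _ = _ := by rw [Fin.sum_univ_succ]
  have hH00 := hHsum 0 0
  refine Fin.cases ?_ ?_ i
  · -- row 0
    rw [Fin.sum_univ_succ]
    have e00 : (fun w' => projTensor d α S w' (0 : Fin (d+1)) 0)
        = fun w' => (1 - α * w' 0)⁻¹ ^ d * S (zfun w') 0 0 := by
      rw [hzfun_def]; rfl
    have hE00 := (hApow d).mul (hF 0 0)
    have v00 : fderiv ℝ (fun w' => projTensor d α S w' (0:Fin (d+1)) 0) w (Pi.single (0:Fin (d+1)) 1)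
        = a ^ d * (a * fderiv ℝ (fun v => S v 0 0) z (Pi.single 0 1)
            + α * a^2 * fderiv ℝ (fun v => S v 0 0) z w)
          + S z 0 0 * ((d:ℝ) * a^(d-1) * (α * a^2)) := by
      rw [e00]; erw [hE00.fderiv]
      simp only [ContinuousLinearMap.add_apply, ContinuousLinearMap.smul_apply,
        ContinuousLinearMap.comp_apply, hev, hcAv, smul_eq_mul]
      simp only [← hz_def, ← ha_def]
      simp [Pi.single_eq_same]
      try ring
    have e0s : ∀ js : Fin (d+1), js ≠ 0 → (fun w' => projTensor d α S w' (0:Fin (d+1)) js)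
        = fun w' => (1 - α * w' 0)⁻¹ ^ (d+1) * S (zfun w') 0 js
          - α * (1 - α * w' 0)⁻¹ ^ d * S (zfun w') 0 0 * ((1 - α * w' 0)⁻¹ * w' js) := by
      intro js h
      rw [hzfun_def]
      funext w'
      simp [projTensor, h]
      try rfl
    have hEs := fun (js : Fin (d+1)) =>
      ((hApow (d+1)).mul (hF 0 js)).sub
        ((((hApow d).const_mul α).mul (hF 0 0)).mul (hZ js))
    have v0s : ∀ j : Fin d,
        fderiv ℝ (fun w' => projTensor d α S w' (0:Fin (d+1)) j.succ) w (Pi.single j.succ 1)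
        = a^(d+2) * fderiv ℝ (fun v => S v 0 j.succ) z (Pi.single j.succ 1)
          - α * a^(d+1) * S z 0 0
          - α * a^(d+2) * (w j.succ * fderiv ℝ (fun v => S v 0 0) z (Pi.single j.succ 1)) := by
      intro j
      have hne0 : (0 : Fin (d+1)) ≠ j.succ := (Fin.succ_ne_zero j).symm
      rw [e0s j.succ (Fin.succ_ne_zero j)]; erw [(hEs j.succ).fderiv]
      simp only [ContinuousLinearMap.sub_apply, ContinuousLinearMap.add_apply,
        ContinuousLinearMap.smul_apply, ContinuousLinearMap.comp_apply,
        ContinuousLinearMap.proj_apply, hev, hcAv, smul_eq_mul, Pi.mul_apply]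
      simp only [← hz_def, ← ha_def]
      simp [Pi.single_apply, hne0]
      ring
    simp only [v0s]
    rw [Finset.sum_sub_distrib, Finset.sum_sub_distrib,
      ← Finset.mul_sum Finset.univ
        (fun j : Fin d => fderiv ℝ (fun v => S v 0 j.succ) z (Pi.single j.succ 1)) (a^(d+2)),
      ← Finset.mul_sum Finset.univ
        (fun j : Fin d => w j.succ * fderiv ℝ (fun v => S v 0 0) z (Pi.single j.succ 1)) (α*a^(d+2)),
      Finset.sum_const, Finset.card_univ, Fintype.card_fin, nsmul_eq_mul, v00]
    linear_combination (α*a^(d+2)) * hH00 + a^(d+2) * hdiv0 + (α*a*(S z 0 0)) * hpow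
      + (-(a^(d+1))*(fderiv ℝ (fun v => S v 0 0) z (Pi.single 0 1))) * ha1
  · -- row i.succ
    intro i0
    rw [Fin.sum_univ_succ]
    have hdivI := hdiv z hzpos i0.succ
    rw [Fin.sum_univ_succ] at hdivI
    have hHi0 := hHsum i0.succ 0
    have hsymm : S z i0.succ 0 = S z 0 i0.succ := (hsym z).apply 0 i0.succ
    have hne : (i0.succ : Fin (d+1)) ≠ 0 := Fin.succ_ne_zero i0
    have eI0 : (fun w' => projTensor d α S w' i0.succ 0)
        = fun w' => (1 - α * w' 0)⁻¹ ^ (d+1) * S (zfun w') i0.succ 0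
          - α * (1 - α * w' 0)⁻¹ ^ d * S (zfun w') 0 0 * ((1 - α * w' 0)⁻¹ * w' i0.succ) := by
      rw [hzfun_def]
      funext w'
      simp [projTensor, hne]
      try rfl
    have hEI0 := ((hApow (d+1)).mul (hF i0.succ 0)).sub
        ((((hApow d).const_mul α).mul (hF 0 0)).mul (hZ i0.succ))
    have vI0 : fderiv ℝ (fun w' => projTensor d α S w' i0.succ 0) w (Pi.single (0:Fin (d+1)) 1)
        = a^(d+2) * fderiv ℝ (fun v => S v i0.succ 0) z (Pi.single 0 1)
          + α*a^(d+3) * fderiv ℝ (fun v => S v i0.succ 0) z w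
          + ((d:ℝ)+1)*α*a^(d+2)*(S z i0.succ 0)
          - α^2*a^(d+2)*(w i0.succ)*(S z 0 0)
          - α*a^(d+2)*(w i0.succ)*(fderiv ℝ (fun v => S v 0 0) z (Pi.single 0 1))
          - α^2*a^(d+3)*(w i0.succ)*(fderiv ℝ (fun v => S v 0 0) z w)
          - (d:ℝ)*α^2*(a^(d-1)*a^3)*(w i0.succ)*(S z 0 0) := by
      rw [eI0]; erw [hEI0.fderiv]
      simp only [ContinuousLinearMap.sub_apply, ContinuousLinearMap.add_apply,
        ContinuousLinearMap.smul_apply, ContinuousLinearMap.comp_apply,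
        ContinuousLinearMap.proj_apply, hev, hcAv, smul_eq_mul, Pi.mul_apply]
      simp only [← hz_def, ← ha_def]
      simp [Pi.single_apply, hne]
      try ring
    have eIs : ∀ js : Fin (d+1), js ≠ 0 → (fun w' => projTensor d α S w' i0.succ js)
        = fun w' => (1 - α * w' 0)⁻¹ ^ (d+2) * S (zfun w') i0.succ js
          - α * (1 - α * w' 0)⁻¹ ^ (d+1)
            * (S (zfun w') i0.succ 0 * ((1 - α * w' 0)⁻¹ * w' js)
              + ((1 - α * w' 0)⁻¹ * w' i0.succ) * S (zfun w') 0 js)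
          + α^2 * (1 - α * w' 0)⁻¹ ^ d * S (zfun w') 0 0 * ((1 - α * w' 0)⁻¹ * w' i0.succ)
            * ((1 - α * w' 0)⁻¹ * w' js) := by
      intro js h
      rw [hzfun_def]
      funext w'
      simp [projTensor, h, hne]
      try rfl
    have hEIs := fun (js : Fin (d+1)) =>
      (((hApow (d+2)).mul (hF i0.succ js)).sub
        (((hApow (d+1)).const_mul α).mul
          (((hF i0.succ 0).mul (hZ js)).add ((hZ i0.succ).mul (hF 0 js))))).add
        (((((hApow d).const_mul (α^2)).mul (hF 0 0)).mul (hZ i0.succ)).mul (hZ js))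
    have vIs : ∀ j : Fin d,
        fderiv ℝ (fun w' => projTensor d α S w' i0.succ j.succ) w (Pi.single j.succ 1)
        = a^(d+3) * fderiv ℝ (fun v => S v i0.succ j.succ) z (Pi.single j.succ 1)
          - α*a^(d+3) * (w j.succ * fderiv ℝ (fun v => S v i0.succ 0) z (Pi.single j.succ 1))
          - α*a^(d+2) * S z i0.succ 0
          - α*a^(d+3)*(w i0.succ) * (fderiv ℝ (fun v => S v 0 j.succ) z (Pi.single j.succ 1))
          + α^2*a^(d+3)*(w i0.succ)
            * (w j.succ * fderiv ℝ (fun v => S v 0 0) z (Pi.single j.succ 1))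
          + α^2*a^(d+2)*(w i0.succ) * S z 0 0
          + (α^2*a^(d+2)*(S z 0 0)*(w j.succ) - α*a^(d+2)*(S z 0 j.succ))
            * (if i0 = j then (1:ℝ) else 0) := by
      intro j
      have hne0 : (0 : Fin (d+1)) ≠ j.succ := (Fin.succ_ne_zero j).symm
      rw [eIs j.succ (Fin.succ_ne_zero j)]; erw [(hEIs j.succ).fderiv]
      simp only [ContinuousLinearMap.sub_apply, ContinuousLinearMap.add_apply,
        ContinuousLinearMap.smul_apply, ContinuousLinearMap.comp_apply,
        ContinuousLinearMap.proj_apply, hev, hcAv, smul_eq_mul, Pi.mul_apply]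
      simp only [← hz_def, ← ha_def]
      simp [Pi.single_apply, hne0, Fin.succ_inj]
      rcases eq_or_ne i0 j with hij | hij <;> simp [hij] <;> ring
    have hite : ∑ j : Fin d, (α^2*a^(d+2)*(S z 0 0)*(w j.succ) - α*a^(d+2)*(S z 0 j.succ))
          * (if i0 = j then (1:ℝ) else 0)
        = α^2*a^(d+2)*(S z 0 0)*(w i0.succ) - α*a^(d+2)*(S z 0 i0.succ) := by
      simp [mul_ite, Finset.sum_ite_eq]
    simp only [vIs]
    rw [Finset.sum_add_distrib, Finset.sum_add_distrib, Finset.sum_add_distrib,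
      Finset.sum_sub_distrib, Finset.sum_sub_distrib, Finset.sum_sub_distrib,
      ← Finset.mul_sum Finset.univ
        (fun j : Fin d => fderiv ℝ (fun v => S v i0.succ j.succ) z (Pi.single j.succ 1)) (a^(d+3)),
      ← Finset.mul_sum Finset.univ
        (fun j : Fin d => w j.succ * fderiv ℝ (fun v => S v i0.succ 0) z (Pi.single j.succ 1))
        (α*a^(d+3)),
      ← Finset.mul_sum Finset.univ
        (fun j : Fin d => fderiv ℝ (fun v => S v 0 j.succ) z (Pi.single j.succ 1))
        (α*a^(d+3)*(w i0.succ)),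
      ← Finset.mul_sum Finset.univ
        (fun j : Fin d => w j.succ * fderiv ℝ (fun v => S v 0 0) z (Pi.single j.succ 1))
        (α^2*a^(d+3)*(w i0.succ)),
      Finset.sum_const, Finset.sum_const, Finset.card_univ, Fintype.card_fin, nsmul_eq_mul,
      hite, vI0]
    linear_combination (α*a^(d+3)) * hHi0 + a^(d+3) * hdivI
      - (α^2*a^(d+3)*(w i0.succ)) * hH00 - (α*a^(d+3)*(w i0.succ)) * hdiv0
      + (α*a^(d+2)) * hsymm
      + (-(a^(d+2))*(fderiv ℝ (fun v => S v i0.succ 0) z (Pi.single 0 1))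
          + α*a^(d+2)*(w i0.succ)*(fderiv ℝ (fun v => S v 0 0) z (Pi.single 0 1))) * ha1
      + (-(α^2)*a^2*(w i0.succ)*(S z 0 0)) * hpow
end

section
/- Let Σ : Γ → Sym(1+n) be a C¹ symmetric Divergence-free tensor on an open cone Γ ⊂ ℝ^(1+n), positively homogeneous of degree −n−1, written Σ(λ,z) = λ^{−n−1} [[h(z/λ), Z(z/λ)ᵀ],[Z(z/λ), H(z/λ)]] for λ > 0. Then the n×n symmetric tensor H̃(x) = H(x) − x⊗Z(x) − Z(x)⊗x + h(x) x⊗x satisfies Div_x H̃ = 0. -/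
open Matrix

/-- Euler's identity for homogeneous functions of degree `-k`. -/
lemma euler_aux {m : ℕ} {f : (Fin m → ℝ) → ℝ} {z : Fin m → ℝ}
    (hf : DifferentiableAt ℝ f z) (k : ℕ)
    (hhom : ∀ c : ℝ, 0 < c → f (c • z) = (c ^ k)⁻¹ * f z) :
    fderiv ℝ f z z = -(k : ℝ) * f z := by
  have hsm : HasDerivAt (fun c : ℝ => c • z) z 1 := by
    simpa using (hasDerivAt_id (1:ℝ)).smul_const z
  have h1 : HasDerivAt (fun c : ℝ => f (c • z)) (fderiv ℝ f z z) 1 := by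
    have hf' : HasFDerivAt f (fderiv ℝ f z) ((1:ℝ) • z) := by
      rw [one_smul]; exact hf.hasFDerivAt
    have := hf'.comp_hasDerivAt 1 hsm
    exact this
  have h2 : HasDerivAt (fun c : ℝ => (c ^ k)⁻¹ * f z) (-(k : ℝ) * f z) 1 := by
    have hp : HasDerivAt (fun c : ℝ => c ^ k) ((k : ℝ) * 1 ^ (k - 1)) 1 :=
      hasDerivAt_pow k 1
    have hi := hp.inv (by simp)
    have := hi.mul_const (f z)
    simpa using this
  have heq : (fun c : ℝ => f (c • z)) =ᶠ[nhds (1:ℝ)] fun c => (c ^ k)⁻¹ * f z := by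
    filter_upwards [isOpen_Ioi.mem_nhds (by norm_num : (1:ℝ) ∈ Set.Ioi (0:ℝ))] with c hc
    exact hhom c hc
  have h2' : HasDerivAt (fun c : ℝ => f (c • z)) (-(k : ℝ) * f z) 1 :=
    h2.congr_of_eventuallyEq heq
  exact h1.unique h2'

/-- The embedding `y ↦ Fin.cons 0 y` as a continuous linear map. -/
noncomputable def consL (n : ℕ) : (Fin n → ℝ) →L[ℝ] (Fin (n + 1) → ℝ) :=
  ContinuousLinearMap.pi (Fin.cases 0 fun k => ContinuousLinearMap.proj k)

lemma consL_apply_zero (n : ℕ) (v : Fin n → ℝ) : consL n v 0 = 0 := by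
  simp [consL]

lemma consL_apply_succ (n : ℕ) (v : Fin n → ℝ) (k : Fin n) : consL n v k.succ = v k := by
  simp [consL]

lemma consL_single (n : ℕ) (j : Fin n) :
    consL n (Pi.single j 1) = Pi.single j.succ 1 := by
  funext i
  refine Fin.cases ?_ (fun k => ?_) i
  · rw [consL_apply_zero, Pi.single_apply]
    simp [(Fin.succ_ne_zero j).symm]
  · rw [consL_apply_succ, Pi.single_apply, Pi.single_apply]
    simp [Fin.succ_inj]

lemma hasFDerivAt_slice {n : ℕ} {f : (Fin (n + 1) → ℝ) → ℝ} {x : Fin n → ℝ}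
    (hf : DifferentiableAt ℝ f (Fin.cons 1 x)) :
    HasFDerivAt (fun y : Fin n → ℝ => f (Fin.cons 1 y))
      ((fderiv ℝ f (Fin.cons 1 x)).comp (consL n)) x := by
  have hL : HasFDerivAt (fun y : Fin n → ℝ => Fin.cons (1:ℝ) y) (consL n) x := by
    have heq : (fun y : Fin n → ℝ => Fin.cons (1:ℝ) y)
        = fun y => (Fin.cons (1:ℝ) 0 : Fin (n+1) → ℝ) + consL n y := by
      funext y
      funext i
      refine Fin.cases ?_ (fun k => ?_) i <;>
        simp [consL_apply_zero, consL_apply_succ, Pi.add_apply]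
    rw [heq]
    simpa using ((consL n).hasFDerivAt (x := x)).const_add (Fin.cons (1:ℝ) 0)
  exact hf.hasFDerivAt.comp x hL

/-- If `Σ` is a C¹ symmetric Divergence-free tensor on an open cone
`Γ ⊂ ℝ^(1+n)`, positively homogeneous of degree `-n-1`, with blocks
`h, Z, H` on the slice `λ = 1`, then
`H̃(x) = H(x) - x ⊗ Z(x) - Z(x) ⊗ x + h(x) x ⊗ x` is Divergence-free. -/
theorem restriction_divergenceFree (n : ℕ) (Γ : Set (Fin (n + 1) → ℝ))
    (hΓ : IsOpen Γ) (hcone : ∀ c : ℝ, 0 < c → ∀ z ∈ Γ, c • z ∈ Γ)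
    (Sig : (Fin (n + 1) → ℝ) → Matrix (Fin (n + 1)) (Fin (n + 1)) ℝ)
    (hC1 : ∀ i j, ContDiffOn ℝ 1 (fun z => Sig z i j) Γ)
    (hsym : ∀ z ∈ Γ, (Sig z).IsSymm)
    (hhom : ∀ c : ℝ, 0 < c → ∀ z ∈ Γ, Sig (c • z) = (c ^ (n + 1))⁻¹ • Sig z)
    (hdiv : ∀ z ∈ Γ, ∀ i, ∑ j, fderiv ℝ (fun w => Sig w i j) z (Pi.single j 1) = 0) :
    ∀ x : Fin n → ℝ, Fin.cons 1 x ∈ Γ → ∀ i : Fin n,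
      ∑ j : Fin n, fderiv ℝ
        (fun y : Fin n → ℝ =>
          Sig (Fin.cons 1 y) i.succ j.succ
            - y i * Sig (Fin.cons 1 y) j.succ 0
            - Sig (Fin.cons 1 y) i.succ 0 * y j
            + Sig (Fin.cons 1 y) 0 0 * y i * y j)
        x (Pi.single j 1) = 0 := by
  intro x hx i
  set p : Fin (n + 1) → ℝ := Fin.cons 1 x with hp
  -- differentiability of entries at p
  have hdiff : ∀ I J : Fin (n + 1), DifferentiableAt ℝ (fun w => Sig w I J) p :=
    fun I J => ((hC1 I J).differentiableOn one_ne_zero).differentiableAt (hΓ.mem_nhds hx)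
  -- directional derivatives of entries at p
  set D : Fin (n + 1) → Fin (n + 1) → Fin (n + 1) → ℝ :=
    fun I J K => fderiv ℝ (fun w => Sig w I J) p (Pi.single K 1) with hD
  -- symmetry of D
  have hsymD : ∀ I J K, D I J K = D J I K := by
    intro I J K
    have heq : (fun w => Sig w I J) =ᶠ[nhds p] fun w => Sig w J I := by
      filter_upwards [hΓ.mem_nhds hx] with w hw
      exact (hsym w hw).apply J I
    simp only [hD]
    rw [heq.fderiv_eq]
  -- Euler identity (decomposed along the basis)
  have euler : ∀ I J : Fin (n + 1),
      D I J 0 + ∑ k : Fin n, x k * D I J k.succ = -(n + 1 : ℝ) * Sig p I J := by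
    intro I J
    have h0 : fderiv ℝ (fun w => Sig w I J) p p = -((n+1 : ℕ) : ℝ) * Sig p I J := by
      refine euler_aux (hdiff I J) (n + 1) ?_
      intro c hc
      have := hhom c hc p hx
      calc Sig (c • p) I J = ((c ^ (n+1))⁻¹ • Sig p) I J := by rw [this]
        _ = (c ^ (n+1))⁻¹ * Sig p I J := by simp [Matrix.smul_apply]
    have hdec : p = ∑ K : Fin (n + 1), p K • (Pi.single K 1 : Fin (n + 1) → ℝ) := by
      conv_lhs => rw [pi_eq_sum_univ p]
      refine Finset.sum_congr rfl fun K _ => ?_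
      funext m
      simp [Pi.single_apply, eq_comm]
    have h1 : fderiv ℝ (fun w => Sig w I J) p p
        = ∑ K : Fin (n + 1), p K * D I J K := by
      calc fderiv ℝ (fun w => Sig w I J) p p
          = fderiv ℝ (fun w => Sig w I J) p
              (∑ K : Fin (n + 1), p K • (Pi.single K 1 : Fin (n + 1) → ℝ)) := by
            rw [← hdec]
        _ = ∑ K : Fin (n + 1), p K * D I J K := by
            rw [map_sum]
            refine Finset.sum_congr rfl fun K _ => ?_
            rw [_root_.map_smul, smul_eq_mul]
    rw [h1] at h0
    rw [Fin.sum_univ_succ] at h0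
    simpa [hp, Fin.cons_zero, Fin.cons_succ] using h0
  -- divergence identity (decomposed)
  have diver : ∀ I : Fin (n + 1),
      D I 0 0 + ∑ k : Fin n, D I k.succ k.succ = 0 := by
    intro I
    have := hdiv p hx I
    rwa [Fin.sum_univ_succ] at this
  -- key relations
  have R1 : ∑ k : Fin n, D k.succ 0 k.succ
      = (n + 1 : ℝ) * Sig p 0 0 + ∑ k : Fin n, x k * D 0 0 k.succ := by
    have h1 := diver 0
    have h2 := euler 0 0
    have h3 : ∀ k : Fin n, D 0 k.succ k.succ = D k.succ 0 k.succ := fun k => hsymD 0 k.succ k.succ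
    simp only [h3] at h1
    linarith
  have R2 : ∑ k : Fin n, D i.succ k.succ k.succ
      = (n + 1 : ℝ) * Sig p i.succ 0 + ∑ k : Fin n, x k * D i.succ 0 k.succ := by
    have h1 := diver i.succ
    have h2 := euler i.succ 0
    linarith
  -- compute each term of the sum
  have key : ∀ j : Fin n,
      fderiv ℝ (fun y : Fin n → ℝ =>
          Sig (Fin.cons 1 y) i.succ j.succ
            - y i * Sig (Fin.cons 1 y) j.succ 0
            - Sig (Fin.cons 1 y) i.succ 0 * y j
            + Sig (Fin.cons 1 y) 0 0 * y i * y j)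
        x (Pi.single j 1)
      = D i.succ j.succ j.succ
        - (x i * D j.succ 0 j.succ + Sig p j.succ 0 * (if i = j then (1:ℝ) else 0))
        - (Sig p i.succ 0 * 1 + x j * D i.succ 0 j.succ)
        + ((Sig p 0 0 * x i) * 1
            + x j * (Sig p 0 0 * (if i = j then (1:ℝ) else 0) + x i * D 0 0 j.succ)) := by
    intro j
    have hA := hasFDerivAt_slice (n := n) (x := x) (hdiff i.succ j.succ)
    have hB := hasFDerivAt_slice (n := n) (x := x) (hdiff j.succ 0)
    have hC := hasFDerivAt_slice (n := n) (x := x) (hdiff i.succ 0)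
    have hE := hasFDerivAt_slice (n := n) (x := x) (hdiff 0 0)
    have hyi : HasFDerivAt (fun y : Fin n → ℝ => y i)
        (ContinuousLinearMap.proj (R := ℝ) (φ := fun _ : Fin n => ℝ) i) x :=
      hasFDerivAt_apply i x
    have hyj : HasFDerivAt (fun y : Fin n → ℝ => y j)
        (ContinuousLinearMap.proj (R := ℝ) (φ := fun _ : Fin n => ℝ) j) x :=
      hasFDerivAt_apply j x
    have hF := ((hA.sub (hyi.mul hB)).sub (hC.mul hyj)).add ((hE.mul hyi).mul hyj)
    have hF' : HasFDerivAt (fun y : Fin n → ℝ =>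
          Sig (Fin.cons 1 y) i.succ j.succ
            - y i * Sig (Fin.cons 1 y) j.succ 0
            - Sig (Fin.cons 1 y) i.succ 0 * y j
            + Sig (Fin.cons 1 y) 0 0 * y i * y j) _ x := hF
    rw [hF'.fderiv]
    simp only [ContinuousLinearMap.add_apply, ContinuousLinearMap.sub_apply,
      ContinuousLinearMap.smul_apply, ContinuousLinearMap.comp_apply,
      ContinuousLinearMap.proj_apply, consL_single, smul_eq_mul, hD, hp,
      Pi.single_apply, Pi.mul_apply]
    simp only [eq_self_iff_true, if_true]
  simp only [key]
  -- expand and finish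
  rw [Finset.sum_add_distrib, Finset.sum_sub_distrib, Finset.sum_sub_distrib]
  have s1 : ∑ j : Fin n, (x i * D j.succ 0 j.succ + Sig p j.succ 0 * (if i = j then (1:ℝ) else 0))
      = x i * (∑ j : Fin n, D j.succ 0 j.succ) + Sig p i.succ 0 := by
    rw [Finset.sum_add_distrib, Finset.mul_sum]
    congr 1
    simp [Finset.sum_ite_eq, mul_ite]
  have s2 : ∑ j : Fin n, (Sig p i.succ 0 * 1 + x j * D i.succ 0 j.succ)
      = (n : ℝ) * Sig p i.succ 0 + ∑ j : Fin n, x j * D i.succ 0 j.succ := by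
    rw [Finset.sum_add_distrib]
    simp [Finset.sum_const, mul_comm]
  have s3 : ∑ j : Fin n, ((Sig p 0 0 * x i) * 1
        + x j * (Sig p 0 0 * (if i = j then (1:ℝ) else 0) + x i * D 0 0 j.succ))
      = (n : ℝ) * (Sig p 0 0 * x i) + (x i * Sig p 0 0
        + x i * ∑ j : Fin n, x j * D 0 0 j.succ) := by
    rw [Finset.sum_add_distrib]
    congr 1
    · simp [Finset.sum_const, mul_comm]
    · have : ∀ j : Fin n, x j * (Sig p 0 0 * (if i = j then (1:ℝ) else 0) + x i * D 0 0 j.succ)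
          = (if i = j then x j * Sig p 0 0 else 0) + x i * (x j * D 0 0 j.succ) := by
        intro j; by_cases h : i = j <;> simp [h] <;> ring
      simp only [this]
      rw [Finset.sum_add_distrib, Finset.sum_ite_eq, ← Finset.mul_sum]
      simp [mul_comm]
  rw [s1, s2, s3, R2]
  linear_combination (-(x i)) * R1
end

section
/- Let θ : ℝ^(1+d)∖{p} → ℝ be C¹ and positively homogeneous of degree 1 about the point p = (t₀, x₀), i.e. (t−t₀)∂_tθ + (x−x₀)·∇_xθ = θ. Let α > 0, and define θ̄(s,y) = (1−αs)θ(s/(1−αs), y/(1−αs)). Then θ̄ is positively homogeneous of degree 1 about the image point p̄ = (s₀,y₀) = (t₀/(1+t₀α), x₀/(1+t₀α)): (s−s₀)∂_sθ̄ + (y−y₀)·∇_yθ̄ = θ̄. -/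
open Finset ContinuousLinearMap

/-- If `θ` is positively homogeneous of degree 1 about `p = (t₀, x₀)`
(Euler identity), then `θ̄(s,y) = (1-αs) θ(s/(1-αs), y/(1-αs))` is positively
homogeneous of degree 1 about the image point `p̄ = p / (1 + α t₀)`. -/
theorem projective_preserves_homogeneity (d : ℕ) (α : ℝ) (hα : 0 < α)
    (p : Fin (d + 1) → ℝ) (hp : 0 < 1 + α * p 0)
    (θ : (Fin (d + 1) → ℝ) → ℝ)
    (hdiff : ∀ z : Fin (d + 1) → ℝ, z ≠ p → DifferentiableAt ℝ θ z)
    (heuler : ∀ z : Fin (d + 1) → ℝ, z ≠ p →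
      ∑ i, (z i - p i) * fderiv ℝ θ z (Pi.single i 1) = θ z) :
    ∀ w : Fin (d + 1) → ℝ, 0 < 1 - α * w 0 → (1 - α * w 0)⁻¹ • w ≠ p →
      ∑ i, (w i - (1 + α * p 0)⁻¹ * p i) *
          fderiv ℝ (fun w' => (1 - α * w' 0) * θ ((1 - α * w' 0)⁻¹ • w')) w
            (Pi.single i 1) =
        (1 - α * w 0) * θ ((1 - α * w 0)⁻¹ • w) := by
  intro w hw hwp
  set c : ℝ := 1 - α * w 0 with hcdef
  have hc0 : c ≠ 0 := ne_of_gt hw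
  set z : Fin (d + 1) → ℝ := c⁻¹ • w with hzdef
  set L : (Fin (d+1) → ℝ) →L[ℝ] ℝ :=
    -(α • (ContinuousLinearMap.proj 0 : (Fin (d+1) → ℝ) →L[ℝ] ℝ)) with hLdef
  have hL : HasFDerivAt (fun w' : Fin (d + 1) → ℝ => 1 - α * w' 0) L w := by
    have h1 : HasFDerivAt (fun w' : Fin (d + 1) → ℝ => w' 0)
        (ContinuousLinearMap.proj 0 : (Fin (d+1) → ℝ) →L[ℝ] ℝ) w :=
      (ContinuousLinearMap.proj 0 : (Fin (d+1) → ℝ) →L[ℝ] ℝ).hasFDerivAt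
    exact ((hasFDerivAt_const (1:ℝ) w).sub (h1.const_mul α)).congr_fderiv (by rw [hLdef]; simp)
  set Linv : (Fin (d+1) → ℝ) →L[ℝ] ℝ :=
    (smulRight (1 : ℝ →L[ℝ] ℝ) (-(c ^ 2)⁻¹)).comp L with hLinvdef
  have hcinv : HasFDerivAt (fun w' : Fin (d + 1) → ℝ => (1 - α * w' 0)⁻¹) Linv w :=
    (hasFDerivAt_inv hc0).comp w hL
  set G : (Fin (d+1) → ℝ) →L[ℝ] (Fin (d+1) → ℝ) :=
    c⁻¹ • (ContinuousLinearMap.id ℝ (Fin (d+1) → ℝ)) + Linv.smulRight w with hGdef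
  have hg : HasFDerivAt (fun w' : Fin (d + 1) → ℝ => (1 - α * w' 0)⁻¹ • w') G w :=
    hcinv.smul (hasFDerivAt_id w)
  have hθ : HasFDerivAt θ (fderiv ℝ θ z) z := (hdiff z hwp).hasFDerivAt
  have hcomp : HasFDerivAt (fun w' : Fin (d + 1) → ℝ => θ ((1 - α * w' 0)⁻¹ • w'))
      ((fderiv ℝ θ z).comp G) w := hθ.comp w hg
  have hF := (hL.mul hcomp).fderiv
  set A := fderiv ℝ θ z with hA
  set a : Fin (d + 1) → ℝ := fun i => A (Pi.single i 1) with ha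
  have hsingle : ∀ i : Fin (d+1), (fun j => if i = j then (1:ℝ) else 0) = Pi.single i 1 := by
    intro i; funext j; simp [Pi.single_apply, eq_comm]
  have hAw : A w = ∑ i, w i * a i := by
    have h2 := LinearMap.pi_apply_eq_sum_univ (A.toLinearMap) w
    simp only [hsingle] at h2
    simpa [ha, smul_eq_mul] using h2
  have hFi : ∀ i : Fin (d+1), fderiv ℝ
      (fun w' => (1 - α * w' 0) * θ ((1 - α * w' 0)⁻¹ • w')) w (Pi.single i 1)
      = a i + ((Pi.single i 1 : Fin (d+1) → ℝ) 0) *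
          ((α * c⁻¹) * (∑ j, w j * a j) - α * θ z) := by
    intro i
    rw [show (fun w' : Fin (d + 1) → ℝ => (1 - α * w' 0) * θ ((1 - α * w' 0)⁻¹ • w')) =
        ((fun w' : Fin (d + 1) → ℝ => 1 - α * w' 0) * fun w' => θ ((1 - α * w' 0)⁻¹ • w')) from rfl, hF]
    simp only [hGdef, hLinvdef, hLdef, ContinuousLinearMap.add_apply,
      ContinuousLinearMap.coe_smul', Pi.smul_apply, ContinuousLinearMap.coe_comp',
      Function.comp_apply, ContinuousLinearMap.smulRight_apply,
      ContinuousLinearMap.neg_apply, ContinuousLinearMap.proj_apply,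
      ContinuousLinearMap.one_apply, ContinuousLinearMap.coe_id', id_eq,
      ContinuousLinearMap.mul_apply', smul_eq_mul, map_add, map_smul, ← hA, ← ha, hAw]
    have hcc : c * (c ^ 2)⁻¹ = c⁻¹ := by field_simp
    simp only [ha, ← hcdef, ← hzdef]
    field_simp
    ring_nf
  simp only [hFi]
  have hβ : (1 + α * p 0) ≠ 0 := ne_of_gt hp
  have hE := heuler z hwp
  have hzi : ∀ i : Fin (d+1), z i = c⁻¹ * w i := fun i => rfl
  simp only [← hA, ← ha, hzi] at hE
  set T := θ z with hT
  set S1 := ∑ i, w i * a i with hS1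
  set S2 := ∑ i, p i * a i with hS2
  have hE' : c⁻¹ * S1 - S2 = T := by
    rw [← hE, hS1, hS2, Finset.mul_sum, ← Finset.sum_sub_distrib]
    exact Finset.sum_congr rfl fun i _ => by ring
  have hterm : ∀ i : Fin (d+1), (w i - (1 + α * p 0)⁻¹ * p i) *
      (a i + ((Pi.single i 1 : Fin (d+1) → ℝ) 0) * ((α * c⁻¹) * S1 - α * T))
      = (w i * a i - (1 + α * p 0)⁻¹ * (p i * a i)) +
        (if (0 : Fin (d+1)) = i then
          (w i - (1 + α * p 0)⁻¹ * p i) * ((α * c⁻¹) * S1 - α * T) else 0) := by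
    intro i
    simp only [Pi.single_apply]
    split <;> ring
  rw [Finset.sum_congr rfl fun i _ => hterm i, Finset.sum_add_distrib,
    Finset.sum_sub_distrib, ← Finset.mul_sum, ← hS1, ← hS2,
    Finset.sum_ite_eq, if_pos (Finset.mem_univ _)]
  have hw0 : α * w 0 = 1 - c := by rw [hcdef]; ring
  have hβ1 : (1 + α * p 0)⁻¹ * (1 + α * p 0) = 1 := inv_mul_cancel₀ hβ
  have hS : S1 = c * (S2 + T) := by
    have h := congrArg (fun x => c * x) hE'
    simp only [mul_sub, ← mul_assoc, mul_inv_cancel₀ hc0, one_mul] at h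
    linarith
  have hc1 : α * c⁻¹ * S1 = α * (S2 + T) := by
    rw [hS]; field_simp
  rw [hc1, hS]
  linear_combination S2 * hw0 - S2 * hβ1
end
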